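/- Evaluation of the Macdonald polynomial at t = 1 in terms of cyclotomic coefficients: for all integers 1 ≤ i ≤ n, C_{n−i}^{(i)}(q^{2i}) · c_{i,i−1}(q) = q^{2(n−i)(i−1)} · c_{n,i−1}(q) in ℚ(q). -/

import Mathlib

/- STATEMENT 17: Evaluation of the Macdonald polynomial at t = 1 in terms of cyclotomic
coefficients: for all integers 1 ≤ i ≤ n,
C_{n−i}^{(i)}(q^{2i}) · c_{i,i−1}(q) = q^{2(n−i)(i−1)} · c_{n,i−1}(q) in ℚ(q). -/

noncomputable section

/-- `q`, the generator of `ℚ(q)`. -/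
def q : RatFunc ℚ := RatFunc.X

/-- The classical cyclotomic coefficient `c_{n,i−1}(q)`. -/
def cyc (n i : ℕ) : RatFunc ℚ :=
  if 1 ≤ i ∧ i ≤ n then
    (q ^ (2 : ℤ) - q ^ (-2 : ℤ))⁻¹ *
      ∏ p ∈ Finset.Icc ((n : ℤ) - i + 1) ((n : ℤ) + i - 1), (q ^ (2 * p) - q ^ (-(2 * p)))
  else 0

/-- The Gaussian binomial coefficient `binom(n,m)_Q = ∏_{k=1}^{m} (1 − Q^{n−k+1})/(1 − Q^{k})`. -/
def gbinom (Q : RatFunc ℚ) (n m : ℕ) : RatFunc ℚ :=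
  ∏ k ∈ Finset.range m, (1 - Q ^ ((n : ℤ) - k)) / (1 - Q ^ ((k : ℤ) + 1))

/-- The renormalized Macdonald (continuous q-ultraspherical) polynomial value
`C_m^{(i)}(x) = C_m(x; q^{4i} | q⁴)`. -/
def Cmac (i m : ℕ) (x : RatFunc ℚ) : RatFunc ℚ :=
  ∑ k ∈ Finset.range (m + 1),
    gbinom (q ^ 4) (k + i - 1) (i - 1) * gbinom (q ^ 4) (m - k + i - 1) (i - 1) *
      x ^ ((m : ℤ) - 2 * k)

/-! ### Auxiliary lemmas -/

def Qq : RatFunc ℚ := q ^ 4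

lemma Qq_def : (q : RatFunc ℚ) ^ 4 = Qq := rfl

lemma hq : q ≠ 0 := RatFunc.X_ne_zero

lemma q_pow_ne_one {n : ℕ} (hn : n ≠ 0) : q ^ n ≠ 1 := by
  intro h
  have h2 : (Polynomial.X : Polynomial ℚ) ^ n = 1 := by
    apply IsFractionRing.injective (Polynomial ℚ) (RatFunc ℚ)
    rw [map_pow, map_one, RatFunc.algebraMap_X]
    exact h
  have h3 := congrArg Polynomial.natDegree h2
  rw [Polynomial.natDegree_X_pow, Polynomial.natDegree_one] at h3
  exact hn h3

lemma q_zpow_ne_one {z : ℤ} (hz : z ≠ 0) : q ^ z ≠ 1 := by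
  have hpos : ∀ z : ℤ, 0 < z → q ^ z ≠ 1 := by
    intro z hzpos
    lift z to ℕ using hzpos.le
    rw [zpow_natCast]
    exact q_pow_ne_one (by exact_mod_cast hzpos.ne')
  rcases hz.lt_or_gt with h1 | h1
  · intro hc
    apply hpos (-z) (by omega)
    rw [zpow_neg, hc, inv_one]
  · exact hpos z h1

lemma hQ0 : Qq ≠ 0 := pow_ne_zero _ hq

lemma Qq_zpow (z : ℤ) : Qq ^ z = q ^ (4 * z) := by
  rw [← Qq_def, ← zpow_natCast q 4, ← zpow_mul]
  norm_num

lemma one_sub_Qq_zpow_ne {z : ℤ} (hz : z ≠ 0) : 1 - Qq ^ z ≠ 0 := by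
  rw [Qq_zpow]
  exact sub_ne_zero.2 (Ne.symm (q_zpow_ne_one (by omega)))

lemma gbinom_diag (n : ℕ) : gbinom Qq n n = 1 := by
  unfold gbinom
  rw [Finset.prod_div_distrib]
  have hnum : ∏ k ∈ Finset.range n, (1 - Qq ^ ((n : ℤ) - k))
      = ∏ k ∈ Finset.range n, (1 - Qq ^ ((k : ℤ) + 1)) := by
    rw [← Finset.prod_range_reflect (fun k => (1 - Qq ^ ((k : ℤ) + 1))) n]
    apply Finset.prod_congr rfl
    intro k hk
    have hk' : k < n := Finset.mem_range.1 hk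
    have hc : ((n - 1 - k : ℕ) : ℤ) + 1 = (n : ℤ) - k := by omega
    rw [hc]
  rw [hnum, div_self]
  apply Finset.prod_ne_zero_iff.2
  intro k _
  exact one_sub_Qq_zpow_ne (by omega)

lemma gbinom_succ (n m : ℕ) :
    gbinom Qq (n + 1) m * (1 - Qq ^ ((n : ℤ) + 1 - m)) =
      gbinom Qq n m * (1 - Qq ^ ((n : ℤ) + 1)) := by
  unfold gbinom
  rw [Finset.prod_div_distrib, Finset.prod_div_distrib, div_mul_eq_mul_div, div_mul_eq_mul_div]
  congr 1
  have h1 := Finset.prod_range_succ (fun k => (1 - Qq ^ ((n : ℤ) + 1 - k))) m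
  have h2 := Finset.prod_range_succ' (fun k => (1 - Qq ^ ((n : ℤ) + 1 - k))) m
  have hnum1 : ∏ k ∈ Finset.range m, (1 - Qq ^ (((n + 1 : ℕ) : ℤ) - k))
      = ∏ k ∈ Finset.range m, (1 - Qq ^ ((n : ℤ) + 1 - k)) := by
    apply Finset.prod_congr rfl
    intro k _
    have hc : ((n + 1 : ℕ) : ℤ) - k = (n : ℤ) + 1 - k := by omega
    rw [hc]
  rw [hnum1, ← h1, h2]
  have hcz : (1 - Qq ^ ((n : ℤ) + 1 - ((0 : ℕ) : ℤ))) = (1 - Qq ^ ((n : ℤ) + 1)) := by norm_num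
  rw [hcz]
  congr 1
  apply Finset.prod_congr rfl
  intro k _
  have hc : (n : ℤ) + 1 - ((k + 1 : ℕ) : ℤ) = (n : ℤ) - k := by push_cast; ring
  rw [hc]

lemma Brec (j k : ℕ) :
    gbinom Qq (k + j + 1) j * (1 - Qq ^ ((k : ℤ) + 1)) =
      gbinom Qq (k + j) j * (1 - Qq ^ ((k : ℤ) + (j : ℤ) + 1)) := by
  have h := gbinom_succ (k + j) j
  have hc1 : ((k + j : ℕ) : ℤ) + 1 - (j : ℤ) = (k : ℤ) + 1 := by push_cast; ring
  have hc2 : ((k + j : ℕ) : ℤ) + 1 = (k : ℤ) + (j : ℤ) + 1 := by push_cast; ring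
  rw [hc1, hc2] at h
  exact h

def Tsum (j m : ℕ) : RatFunc ℚ :=
  ∑ k ∈ Finset.range (m + 1),
    gbinom Qq (k + j) j * gbinom Qq (m - k + j) j * Qq ^ (-((j : ℤ) + 1) * k)

lemma Tsum_rec (j m : ℕ) :
    (1 - Qq ^ ((m : ℤ) + 1)) * Tsum j (m + 1)
      = (Qq ^ (-((j : ℤ) + 1)) - Qq ^ ((m : ℤ) + 1 + j)) * Tsum j m := by
  set u : ℤ := -((j : ℤ) + 1) with hu
  unfold Tsum
  rw [Finset.mul_sum, Finset.mul_sum]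
  have split : ∀ k ∈ Finset.range (m + 1 + 1),
      (1 - Qq ^ ((m : ℤ) + 1)) *
        (gbinom Qq (k + j) j * gbinom Qq (m + 1 - k + j) j * Qq ^ (u * k))
      = gbinom Qq (k + j) j * (1 - Qq ^ (k : ℤ)) * gbinom Qq (m + 1 - k + j) j * Qq ^ (u * k)
        + gbinom Qq (k + j) j * gbinom Qq (m + 1 - k + j) j *
            (1 - Qq ^ (((m + 1 - k : ℕ)) : ℤ)) * (Qq ^ (u * k) * Qq ^ (k : ℤ)) := by
    intro k hk
    have hk' : k < m + 2 := Finset.mem_range.1 hk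
    have hc : ((m + 1 - k : ℕ) : ℤ) = (m : ℤ) + 1 - k := by omega
    have hz : Qq ^ ((m : ℤ) + 1) = Qq ^ ((m : ℤ) + 1 - k) * Qq ^ (k : ℤ) := by
      rw [← zpow_add₀ hQ0]
      congr 1
      ring
    rw [hc]
    linear_combination (-(gbinom Qq (k + j) j * gbinom Qq (m + 1 - k + j) j * Qq ^ (u * k))) * hz
  rw [Finset.sum_congr rfl split, Finset.sum_add_distrib]
  have hS1 : ∑ k ∈ Finset.range (m + 1 + 1),
      gbinom Qq (k + j) j * (1 - Qq ^ (k : ℤ)) * gbinom Qq (m + 1 - k + j) j * Qq ^ (u * k)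
      = ∑ k ∈ Finset.range (m + 1),
        gbinom Qq (k + j) j * (1 - Qq ^ ((k : ℤ) + (j : ℤ) + 1)) * gbinom Qq (m - k + j) j *
          (Qq ^ (u * k) * Qq ^ u) := by
    rw [Finset.sum_range_succ']
    have h0 : gbinom Qq (0 + j) j * (1 - Qq ^ ((0 : ℕ) : ℤ)) * gbinom Qq (m + 1 - 0 + j) j *
        Qq ^ (u * (0 : ℕ)) = 0 := by
      norm_num
    rw [h0, add_zero]
    apply Finset.sum_congr rfl
    intro k hk
    have h1 : m + 1 - (k + 1) = m - k := by omega
    have h2 : k + 1 + j = k + j + 1 := by omega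
    have h3 : ((k + 1 : ℕ) : ℤ) = (k : ℤ) + 1 := by push_cast; ring
    have h4 : Qq ^ (u * ((k : ℤ) + 1)) = Qq ^ (u * k) * Qq ^ u := by
      rw [← zpow_add₀ hQ0]
      congr 1
      ring
    rw [h1, h2, h3, h4]
    linear_combination (gbinom Qq (m - k + j) j * (Qq ^ (u * (k : ℤ)) * Qq ^ u)) * Brec j k
  have hS2 : ∑ k ∈ Finset.range (m + 1 + 1),
      gbinom Qq (k + j) j * gbinom Qq (m + 1 - k + j) j * (1 - Qq ^ (((m + 1 - k : ℕ)) : ℤ)) *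
        (Qq ^ (u * k) * Qq ^ (k : ℤ))
      = ∑ k ∈ Finset.range (m + 1),
        gbinom Qq (k + j) j * (gbinom Qq (m - k + j) j *
          (1 - Qq ^ (((m - k : ℕ) : ℤ) + (j : ℤ) + 1))) * (Qq ^ (u * k) * Qq ^ (k : ℤ)) := by
    rw [Finset.sum_range_succ]
    have h0 : gbinom Qq (m + 1 + j) j * gbinom Qq (m + 1 - (m + 1) + j) j *
        (1 - Qq ^ (((m + 1 - (m + 1) : ℕ)) : ℤ)) * (Qq ^ (u * (m + 1 : ℕ)) * Qq ^ ((m + 1 : ℕ) : ℤ)) = 0 := by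
      have : m + 1 - (m + 1) = 0 := by omega
      rw [this]
      norm_num
    rw [h0, add_zero]
    apply Finset.sum_congr rfl
    intro k hk
    have hk' : k < m + 1 := Finset.mem_range.1 hk
    have h1 : m + 1 - k + j = m - k + j + 1 := by omega
    have hc : ((m + 1 - k : ℕ) : ℤ) = ((m - k : ℕ) : ℤ) + 1 := by omega
    rw [h1, hc]
    linear_combination (gbinom Qq (k + j) j * (Qq ^ (u * (k : ℤ)) * Qq ^ (k : ℤ))) * Brec j (m - k)
  rw [hS1, hS2, ← Finset.sum_add_distrib]
  apply Finset.sum_congr rfl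
  intro k hk
  have hk' : k < m + 1 := Finset.mem_range.1 hk
  have hc : ((m - k : ℕ) : ℤ) = (m : ℤ) - k := by omega
  rw [hc]
  have e1 : Qq ^ ((k : ℤ) + (j : ℤ) + 1) * Qq ^ u = Qq ^ (k : ℤ) := by
    rw [← zpow_add₀ hQ0]
    congr 1
    rw [hu]
    ring
  have e2 : Qq ^ ((m : ℤ) - k + (j : ℤ) + 1) * Qq ^ (k : ℤ) = Qq ^ ((m : ℤ) + 1 + j) := by
    rw [← zpow_add₀ hQ0]
    congr 1
    ring
  linear_combination (-(gbinom Qq (k + j) j * gbinom Qq (m - k + j) j * Qq ^ (u * (k : ℤ)))) * e1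
    + (-(gbinom Qq (k + j) j * gbinom Qq (m - k + j) j * Qq ^ (u * (k : ℤ)))) * e2

lemma Tsum_eq (j m : ℕ) :
    Tsum j m = Qq ^ (-((j : ℤ) + 1) * m) * gbinom Qq (m + (2 * j + 1)) (2 * j + 1) := by
  induction m with
  | zero =>
      have h1 : Tsum j 0 = gbinom Qq j j * gbinom Qq j j * Qq ^ (-((j : ℤ) + 1) * (0 : ℕ)) := by
        unfold Tsum
        rw [Finset.sum_range_one]
        norm_num
      rw [h1, gbinom_diag]
      have h2 : 0 + (2 * j + 1) = 2 * j + 1 := by omega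
      rw [h2, gbinom_diag]
      norm_num
  | succ m ih =>
      have h0 : (1 - Qq ^ ((m : ℤ) + 1)) ≠ 0 := one_sub_Qq_zpow_ne (by omega)
      apply mul_left_cancel₀ h0
      rw [Tsum_rec j m, ih]
      have hG := gbinom_succ (m + (2 * j + 1)) (2 * j + 1)
      have hc1 : ((m + (2 * j + 1) : ℕ) : ℤ) + 1 - ((2 * j + 1 : ℕ) : ℤ) = (m : ℤ) + 1 := by
        push_cast; ring
      have hc2 : ((m + (2 * j + 1) : ℕ) : ℤ) + 1 = (m : ℤ) + 2 * j + 2 := by push_cast; ring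
      have hc3 : m + (2 * j + 1) + 1 = m + 1 + (2 * j + 1) := by omega
      rw [hc1, hc2, hc3] at hG
      have hkey : (Qq ^ (-((j : ℤ) + 1)) - Qq ^ ((m : ℤ) + 1 + j)) * Qq ^ (-((j : ℤ) + 1) * m)
          = Qq ^ (-((j : ℤ) + 1) * ((m + 1 : ℕ) : ℤ)) * (1 - Qq ^ ((m : ℤ) + 2 * j + 2)) := by
        rw [sub_mul, mul_sub, mul_one, ← zpow_add₀ hQ0, ← zpow_add₀ hQ0, ← zpow_add₀ hQ0]
        congr 1 <;> [skip; skip] <;> congr 1 <;> push_cast <;> ring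
      calc (Qq ^ (-((j : ℤ) + 1)) - Qq ^ ((m : ℤ) + 1 + j)) *
            (Qq ^ (-((j : ℤ) + 1) * m) * gbinom Qq (m + (2 * j + 1)) (2 * j + 1))
          = ((Qq ^ (-((j : ℤ) + 1)) - Qq ^ ((m : ℤ) + 1 + j)) * Qq ^ (-((j : ℤ) + 1) * m)) *
            gbinom Qq (m + (2 * j + 1)) (2 * j + 1) := by ring
        _ = Qq ^ (-((j : ℤ) + 1) * ((m + 1 : ℕ) : ℤ)) *
            ((1 - Qq ^ ((m : ℤ) + 2 * j + 2)) * gbinom Qq (m + (2 * j + 1)) (2 * j + 1)) := by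
              rw [hkey]; ring
        _ = Qq ^ (-((j : ℤ) + 1) * ((m + 1 : ℕ) : ℤ)) *
            (gbinom Qq (m + 1 + (2 * j + 1)) (2 * j + 1) * (1 - Qq ^ ((m : ℤ) + 1))) := by
              linear_combination (-(Qq ^ (-((j : ℤ) + 1) * ((m + 1 : ℕ) : ℤ)))) * hG
        _ = (1 - Qq ^ ((m : ℤ) + 1)) *
            (Qq ^ (-((j : ℤ) + 1) * ((m + 1 : ℕ) : ℤ)) * gbinom Qq (m + 1 + (2 * j + 1)) (2 * j + 1)) := by
              ring

lemma Cmac_eq (j m : ℕ) :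
    Cmac (j + 1) m (q ^ (2 * ((j + 1 : ℕ) : ℤ))) = q ^ (2 * ((j : ℤ) + 1) * m) * Tsum j m := by
  unfold Cmac Tsum
  rw [Finset.mul_sum]
  apply Finset.sum_congr rfl
  intro k hk
  have hsub : ∀ a : ℕ, a + (j + 1) - 1 = a + j := fun a => by omega
  rw [hsub k, hsub (m - k), Qq_def]
  have h3 : (q ^ (2 * ((j + 1 : ℕ) : ℤ))) ^ ((m : ℤ) - 2 * k)
      = q ^ (2 * ((j : ℤ) + 1) * m) * Qq ^ (-((j : ℤ) + 1) * k) := by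
    rw [Qq_zpow, ← zpow_mul, ← zpow_add₀ hq]
    congr 1
    push_cast
    ring
  rw [h3]
  have hj : (j + 1) - 1 = j := by omega
  rw [hj]
  ring

lemma Icc_int_insert (c d : ℤ) (h : c ≤ d + 1) :
    Finset.Icc c (d + 1) = insert (d + 1) (Finset.Icc c d) := by
  ext x
  simp only [Finset.mem_Icc, Finset.mem_insert]
  omega

lemma prod_Icc_range (c : ℤ) (l : ℕ) (f : ℤ → RatFunc ℚ) :
    ∏ p ∈ Finset.Icc c (c + l), f p = ∏ k ∈ Finset.range (l + 1), f (c + k) := by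
  induction l with
  | zero => simp
  | succ l ih =>
      have h1 : c + ((l + 1 : ℕ) : ℤ) = (c + l) + 1 := by push_cast; ring
      rw [h1, Icc_int_insert c (c + l) (by omega), Finset.prod_insert (by simp),
        Finset.prod_range_succ, ih]
      have h2 : c + ((l + 1 : ℕ) : ℤ) = c + l + 1 := by push_cast; ring
      rw [h2]
      ring

lemma sum_shift (c : ℤ) (l : ℕ) :
    2 * ∑ k ∈ Finset.range l, (c + (k : ℤ)) = l * (2 * c + l - 1) := by
  induction l with
  | zero => simp
  | succ l ih =>
      rw [Finset.sum_range_succ]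
      push_cast
      push_cast at ih
      linear_combination ih

lemma prod_q_zpow (l : ℕ) (f : ℕ → ℤ) :
    ∏ k ∈ Finset.range l, q ^ f k = q ^ (∑ k ∈ Finset.range l, f k) := by
  induction l with
  | zero => simp
  | succ l ih => rw [Finset.prod_range_succ, Finset.sum_range_succ, ih, zpow_add₀ hq]

lemma cyc_eq (j a : ℕ) (ha : j + 1 ≤ a) :
    cyc a (j + 1) = -((q ^ (2 : ℤ) - q ^ (-2 : ℤ))⁻¹) * q ^ (-2 * (2 * (j : ℤ) + 1) * a) *
      ∏ k ∈ Finset.range (2 * j + 1), (1 - Qq ^ ((a : ℤ) - j + k)) := by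
  unfold cyc
  rw [if_pos ⟨by omega, ha⟩]
  have hlo : (a : ℤ) - ((j + 1 : ℕ) : ℤ) + 1 = (a : ℤ) - j := by push_cast; ring
  have hhi : (a : ℤ) + ((j + 1 : ℕ) : ℤ) - 1 = ((a : ℤ) - j) + ((2 * j : ℕ) : ℤ) := by
    push_cast; ring
  rw [hlo, hhi, prod_Icc_range ((a : ℤ) - j) (2 * j)
    (fun p => (q ^ (2 * p) - q ^ (-(2 * p))))]
  have hfac : ∀ k ∈ Finset.range (2 * j + 1),
      (q ^ (2 * ((a : ℤ) - j + k)) - q ^ (-(2 * ((a : ℤ) - j + k))))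
      = (-1) * q ^ (-(2 * ((a : ℤ) - j + k))) * (1 - Qq ^ ((a : ℤ) - j + k)) := by
    intro k _
    have hz : q ^ (-(2 * ((a : ℤ) - j + k))) * Qq ^ ((a : ℤ) - j + k)
        = q ^ (2 * ((a : ℤ) - j + k)) := by
      rw [Qq_zpow, ← zpow_add₀ hq]
      congr 1
      ring
    linear_combination -hz
  rw [Finset.prod_congr rfl hfac]
  rw [Finset.prod_mul_distrib, Finset.prod_mul_distrib]
  rw [prod_q_zpow (2 * j + 1) (fun k => -(2 * ((a : ℤ) - j + k)))]
  have hsum : (∑ k ∈ Finset.range (2 * j + 1), -(2 * ((a : ℤ) - j + k)))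
      = -2 * (2 * (j : ℤ) + 1) * a := by
    have h1 : (∑ k ∈ Finset.range (2 * j + 1), -(2 * ((a : ℤ) - j + k)))
        = -2 * ∑ k ∈ Finset.range (2 * j + 1), (((a : ℤ) - j) + k) := by
      rw [Finset.mul_sum]
      apply Finset.sum_congr rfl
      intro k _
      ring
    rw [h1]
    have h2 := sum_shift ((a : ℤ) - j) (2 * j + 1)
    push_cast at h2 ⊢
    linear_combination -h2
  rw [hsum]
  have hneg : ∏ _k ∈ Finset.range (2 * j + 1), (-1 : RatFunc ℚ) = -1 := by
    rw [Finset.prod_const, Finset.card_range]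
    exact Odd.neg_one_pow ⟨j, by omega⟩
  rw [hneg]
  ring

theorem macdonald_evaluation_at_t_eq_one (n i : ℕ) (hi : 1 ≤ i) (hin : i ≤ n) :
    Cmac i (n - i) (q ^ (2 * (i : ℤ))) * cyc i i =
      q ^ (2 * ((n : ℤ) - i) * ((i : ℤ) - 1)) * cyc n i := by
  obtain ⟨j, rfl⟩ : ∃ j, i = j + 1 := ⟨i - 1, by omega⟩
  obtain ⟨m, rfl⟩ : ∃ m, n = m + (j + 1) := ⟨n - (j + 1), by omega⟩
  have hmn : m + (j + 1) - (j + 1) = m := by omega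
  rw [hmn, Cmac_eq j m, Tsum_eq j m, cyc_eq j (j + 1) le_rfl, cyc_eq j (m + (j + 1)) (by omega)]
  -- gbinom = P_n / P_i
  have hPi : ∀ k : ℕ, k ∈ Finset.range (2 * j + 1) →
      (1 - Qq ^ (((j + 1 : ℕ) : ℤ) - j + k)) = (1 - Qq ^ ((k : ℤ) + 1)) := by
    intro k _
    have hc : ((j + 1 : ℕ) : ℤ) - j + k = (k : ℤ) + 1 := by omega
    rw [hc]
  have hDen_ne : (∏ k ∈ Finset.range (2 * j + 1), (1 - Qq ^ ((k : ℤ) + 1))) ≠ 0 := by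
    apply Finset.prod_ne_zero_iff.2
    intro k _
    exact one_sub_Qq_zpow_ne (by omega)
  have hG : gbinom Qq (m + (2 * j + 1)) (2 * j + 1) *
      ∏ k ∈ Finset.range (2 * j + 1), (1 - Qq ^ ((k : ℤ) + 1))
      = ∏ k ∈ Finset.range (2 * j + 1), (1 - Qq ^ ((((m + (j + 1) : ℕ)) : ℤ) - j + k)) := by
    unfold gbinom
    rw [Finset.prod_div_distrib, div_mul_cancel₀ _ hDen_ne]
    rw [← Finset.prod_range_reflect
      (fun k => (1 - Qq ^ ((((m + (j + 1) : ℕ)) : ℤ) - j + k))) (2 * j + 1)]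
    apply Finset.prod_congr rfl
    intro k hk
    have hk' : k < 2 * j + 1 := Finset.mem_range.1 hk
    have hc : ((m + (2 * j + 1) : ℕ) : ℤ) - k
        = ((m + (j + 1) : ℕ) : ℤ) - j + ((2 * j + 1 - 1 - k : ℕ) : ℤ) := by omega
    rw [hc]
  rw [Finset.prod_congr rfl hPi]
  -- now pure algebra
  have hpow : q ^ (2 * ((j : ℤ) + 1) * m) * Qq ^ (-((j : ℤ) + 1) * m) *
      q ^ (-2 * (2 * (j : ℤ) + 1) * ((j + 1 : ℕ) : ℤ))
      = q ^ (2 * (((m + (j + 1) : ℕ) : ℤ) - ((j + 1 : ℕ) : ℤ)) * (((j + 1 : ℕ) : ℤ) - 1)) *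
        q ^ (-2 * (2 * (j : ℤ) + 1) * ((m + (j + 1) : ℕ) : ℤ)) := by
    rw [Qq_zpow, ← zpow_add₀ hq, ← zpow_add₀ hq, ← zpow_add₀ hq]
    congr 1
    push_cast
    ring
  calc q ^ (2 * ((j : ℤ) + 1) * m) *
        (Qq ^ (-((j : ℤ) + 1) * m) * gbinom Qq (m + (2 * j + 1)) (2 * j + 1)) *
        (-((q ^ (2 : ℤ) - q ^ (-2 : ℤ))⁻¹) * q ^ (-2 * (2 * (j : ℤ) + 1) * ((j + 1 : ℕ) : ℤ)) *
          ∏ k ∈ Finset.range (2 * j + 1), (1 - Qq ^ ((k : ℤ) + 1)))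
      = (q ^ (2 * ((j : ℤ) + 1) * m) * Qq ^ (-((j : ℤ) + 1) * m) *
          q ^ (-2 * (2 * (j : ℤ) + 1) * ((j + 1 : ℕ) : ℤ))) *
        (-((q ^ (2 : ℤ) - q ^ (-2 : ℤ))⁻¹)) *
        (gbinom Qq (m + (2 * j + 1)) (2 * j + 1) *
          ∏ k ∈ Finset.range (2 * j + 1), (1 - Qq ^ ((k : ℤ) + 1))) := by ring
    _ = (q ^ (2 * (((m + (j + 1) : ℕ) : ℤ) - ((j + 1 : ℕ) : ℤ)) * (((j + 1 : ℕ) : ℤ) - 1)) *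
          q ^ (-2 * (2 * (j : ℤ) + 1) * ((m + (j + 1) : ℕ) : ℤ))) *
        (-((q ^ (2 : ℤ) - q ^ (-2 : ℤ))⁻¹)) *
        (∏ k ∈ Finset.range (2 * j + 1), (1 - Qq ^ ((((m + (j + 1) : ℕ)) : ℤ) - j + k))) := by
          rw [hpow, hG]
    _ = q ^ (2 * (((m + (j + 1) : ℕ) : ℤ) - ((j + 1 : ℕ) : ℤ)) * (((j + 1 : ℕ) : ℤ) - 1)) *
        (-((q ^ (2 : ℤ) - q ^ (-2 : ℤ))⁻¹) * q ^ (-2 * (2 * (j : ℤ) + 1) * ((m + (j + 1) : ℕ) : ℤ)) *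
          ∏ k ∈ Finset.range (2 * j + 1), (1 - Qq ^ ((((m + (j + 1) : ℕ)) : ℤ) - j + k))) := by
          ring

end
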